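/- For the lattice potential KdV cube, the value u_{[123]} can be written explicitly as u_{[123]} = (1/H)·Σ_cyc p_i²[u_{[i]}(u_{[l]} − u_{[j]}) + 2p_j(u_{[i]} − u_{[j]} + u_{[l]}) − 2p_l(u_{[i]} + u_{[j]} − u_{[l]})], where H = 2(p₁−p₂)(p₁−p₃)(p₂−p₃) + Σ_cyc (p_i² − p_j²)u_{[l]}, the cyclic sums running over (i,j,l) = (1,2,3),(2,3,1),(3,1,2); in particular u_{[123]} is independent of u and symmetric under permutations of the indices 1,2,3. -/

import Mathlib

/-- Explicit formula for `u_{[123]}` of the lattice potential KdV cube: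
`u_{[123]} = (1/H) Σ_cyc p_i²[u_i(u_l − u_j) + 2p_j(u_i − u_j + u_l) − 2p_l(u_i + u_j − u_l)]`
with `H = 2(p₁−p₂)(p₁−p₃)(p₂−p₃) + Σ_cyc (p_i² − p_j²)u_l`; in particular `u_{[123]}`
is independent of `u` and symmetric under permutations of the indices 1,2,3
(`u_{[123]} = u_{[231]} = u_{[312]}`). -/
theorem lpkdv_u123_explicit_formula
    {K : Type*} [Field K] [CharZero K]
    (p1 p2 p3 u u1 u2 u3 : K)
    (u12 u21 u13 u31 u23 u32 u123 u231 u312 : K)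
    (h12 : 2*(p2 - p1) + u1 - u2 ≠ 0)
    (h21 : 2*(p1 - p2) + u2 - u1 ≠ 0)
    (h13 : 2*(p3 - p1) + u1 - u3 ≠ 0)
    (h31 : 2*(p1 - p3) + u3 - u1 ≠ 0)
    (h23 : 2*(p3 - p2) + u2 - u3 ≠ 0)
    (h32 : 2*(p2 - p3) + u3 - u2 ≠ 0)
    (e12 : u12 = u + 2*(p1 + p2)*(u1 - u2)/(2*(p2 - p1) + u1 - u2))
    (e21 : u21 = u + 2*(p2 + p1)*(u2 - u1)/(2*(p1 - p2) + u2 - u1))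
    (e13 : u13 = u + 2*(p1 + p3)*(u1 - u3)/(2*(p3 - p1) + u1 - u3))
    (e31 : u31 = u + 2*(p3 + p1)*(u3 - u1)/(2*(p1 - p3) + u3 - u1))
    (e23 : u23 = u + 2*(p2 + p3)*(u2 - u3)/(2*(p3 - p2) + u2 - u3))
    (e32 : u32 = u + 2*(p3 + p2)*(u3 - u2)/(2*(p2 - p3) + u3 - u2))
    (h123 : 2*(p2 - p1) + u13 - u23 ≠ 0)
    (h231 : 2*(p3 - p2) + u21 - u31 ≠ 0)
    (h312 : 2*(p1 - p3) + u32 - u12 ≠ 0)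
    (e123 : u123 = u3 + 2*(p1 + p2)*(u13 - u23)/(2*(p2 - p1) + u13 - u23))
    (e231 : u231 = u1 + 2*(p2 + p3)*(u21 - u31)/(2*(p3 - p2) + u21 - u31))
    (e312 : u312 = u2 + 2*(p3 + p1)*(u32 - u12)/(2*(p1 - p3) + u32 - u12))
    (hH : 2*(p1 - p2)*(p1 - p3)*(p2 - p3)
        + (p1^2 - p2^2)*u3 + (p2^2 - p3^2)*u1 + (p3^2 - p1^2)*u2 ≠ 0) :
    u123 = (p1^2*(u1*(u3 - u2) + 2*p2*(u1 - u2 + u3) - 2*p3*(u1 + u2 - u3))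
          + p2^2*(u2*(u1 - u3) + 2*p3*(u2 - u3 + u1) - 2*p1*(u2 + u3 - u1))
          + p3^2*(u3*(u2 - u1) + 2*p1*(u3 - u1 + u2) - 2*p2*(u3 + u1 - u2)))
        / (2*(p1 - p2)*(p1 - p3)*(p2 - p3)
          + (p1^2 - p2^2)*u3 + (p2^2 - p3^2)*u1 + (p3^2 - p1^2)*u2)
      ∧ u123 = u231 ∧ u123 = u312 := by
  have k1 : 2*(p2 - p1) + u13 - u23 = -4*(2*(p1 - p2)*(p1 - p3)*(p2 - p3) + (p1^2 - p2^2)*u3 + (p2^2 - p3^2)*u1 + (p3^2 - p1^2)*u2)/((2*(p3 - p1) + u1 - u3)*(2*(p3 - p2) + u2 - u3)) := by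
    rw [e13, e23]; field_simp; ring
  have k2 : 2*(p3 - p2) + u21 - u31 = -4*(2*(p1 - p2)*(p1 - p3)*(p2 - p3) + (p1^2 - p2^2)*u3 + (p2^2 - p3^2)*u1 + (p3^2 - p1^2)*u2)/((2*(p1 - p2) + u2 - u1)*(2*(p1 - p3) + u3 - u1)) := by
    rw [e21, e31]; field_simp; ring
  have k3 : 2*(p1 - p3) + u32 - u12 = -4*(2*(p1 - p2)*(p1 - p3)*(p2 - p3) + (p1^2 - p2^2)*u3 + (p2^2 - p3^2)*u1 + (p3^2 - p1^2)*u2)/((2*(p2 - p3) + u3 - u2)*(2*(p2 - p1) + u1 - u2)) := by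
    rw [e32, e12]; field_simp; ring
  rw [k1] at e123
  rw [k2] at e231
  rw [k3] at e312
  subst e12 e21 e13 e31 e23 e32 e123 e231 e312
  generalize hG : (2*(p1 - p2)*(p1 - p3)*(p2 - p3) + (p1^2 - p2^2)*u3 + (p2^2 - p3^2)*u1 + (p3^2 - p1^2)*u2) = G at *
  refine ⟨?_, ?_, ?_⟩ <;> field_simp <;> (subst hG; ring)
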